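/- Let ⟨T, Σ, C₁ ⊑ C₂⟩ with Σ = N_C be an EL TBox abduction problem with T in normal form and ⊤-free, Φ its first-order translation, and 𝔗 = (V,E,v₀,l) an EL description tree. Then T ⊨ C₁ ⊑ C_𝔗 holds if and only if there exists a Skolem labeling sl of 𝔗 such that sl(v₀) = sk₀ and I^c(sl) ⊆ PI^{g+}_{N_C}(Φ). -/

import Mathlib

namespace ELAbd

/-! ### EL concepts, TBoxes, semantics -/

inductive ELConcept : Type where
  | top : ELConcept
  | atom : ℕ → ELConcept
  | conj : ELConcept → ELConcept → ELConcept
  | ex : ℕ → ELConcept → ELConcept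
deriving DecidableEq

abbrev CI := ELConcept × ELConcept
abbrev TBox := Finset CI

structure Interp (α : Type) where
  conc : ℕ → Set α
  role : ℕ → Set (α × α)

def ELConcept.sem {α : Type} (I : Interp α) : ELConcept → Set α
  | .top => Set.univ
  | .atom A => I.conc A
  | .conj C D => C.sem I ∩ D.sem I
  | .ex r C => {d | ∃ e, (d, e) ∈ I.role r ∧ e ∈ C.sem I}

def Models {α : Type} (I : Interp α) (T : TBox) : Prop :=
  ∀ ci ∈ T, ci.1.sem I ⊆ ci.2.sem I

def Entails (T : TBox) (C D : ELConcept) : Prop :=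
  ∀ (α : Type) (I : Interp α), Models I T → C.sem I ⊆ D.sem I

def EntailsCI (T : TBox) (ci : CI) : Prop := Entails T ci.1 ci.2

def TEntails (T T' : TBox) : Prop :=
  ∀ (α : Type) (I : Interp α), Models I T → Models I T'

def TEquiv (T T' : TBox) : Prop := TEntails T T' ∧ TEntails T' T

/-- Equality of concepts modulo the convention that conjunctions are read as
sets (associativity, commutativity, idempotence, `⊤` as empty conjunction). -/
inductive CEq : ELConcept → ELConcept → Prop
  | refl (C) : CEq C C
  | symm {C D} : CEq C D → CEq D C
  | trans {C D E} : CEq C D → CEq D E → CEq C E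
  | congr_conj {C C' D D'} : CEq C C' → CEq D D' → CEq (.conj C D) (.conj C' D')
  | congr_ex {r C C'} : CEq C C' → CEq (.ex r C) (.ex r C')
  | comm (C D) : CEq (.conj C D) (.conj D C)
  | assoc (C D E) : CEq (.conj (.conj C D) E) (.conj C (.conj D E))
  | idem (C) : CEq (.conj C C) C
  | top_unit (C) : CEq (.conj .top C) C

/-- The relation `≼⊓` on concepts. -/
inductive PrecSq : ELConcept → ELConcept → Prop
  | refl (C) : PrecSq C C
  | conjL {C D'} (D'') : PrecSq C D' → PrecSq C (.conj D' D'')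
  | ex (r) {C' D'} : PrecSq C' D' → PrecSq (.ex r C') (.ex r D')

def ELConcept.concNames : ELConcept → Set ℕ
  | .top => ∅
  | .atom A => {A}
  | .conj C D => C.concNames ∪ D.concNames
  | .ex _ C => C.concNames

def ELConcept.roleNames : ELConcept → Set ℕ
  | .top => ∅
  | .atom _ => ∅
  | .conj C D => C.roleNames ∪ D.roleNames
  | .ex r C => {r} ∪ C.roleNames

def ELConcept.size : ELConcept → ℕ
  | .top => 1
  | .atom _ => 1
  | .conj C D => C.size + D.size + 1
  | .ex _ C => C.size + 1

def ELConcept.exCount : ELConcept → ℕ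
  | .top => 0
  | .atom _ => 0
  | .conj C D => C.exCount + D.exCount
  | .ex _ C => C.exCount + 1

def tboxSize (T : TBox) : ℕ := T.sum (fun ci => ci.1.size + ci.2.size)

def tboxConcNames (T : TBox) : Set ℕ :=
  {A | ∃ ci ∈ T, A ∈ ci.1.concNames ∪ ci.2.concNames}

def tboxRoleNames (T : TBox) : Set ℕ :=
  {r | ∃ ci ∈ T, r ∈ ci.1.roleNames ∪ ci.2.roleNames}

/-- Normal form (simultaneously `⊤`-free): every CI has one of the four shapes
`A ⊑ B`, `A₁ ⊓ A₂ ⊑ B`, `∃r.A ⊑ B`, `A ⊑ ∃r.B` with atomic concepts. -/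
def NFci (ci : CI) : Prop :=
  (∃ A B, ci = (ELConcept.atom A, ELConcept.atom B)) ∨
  (∃ A₁ A₂ B, ci = (ELConcept.conj (.atom A₁) (.atom A₂), ELConcept.atom B)) ∨
  (∃ r A B, ci = (ELConcept.ex r (.atom A), ELConcept.atom B)) ∨
  (∃ A r B, ci = (ELConcept.atom A, ELConcept.ex r (.atom B)))

def NormalForm (T : TBox) : Prop := ∀ ci ∈ T, NFci ci

/-- Normal form where the components may also be `⊤`. -/
def AtomTop (C : ELConcept) : Prop := C = .top ∨ ∃ A, C = ELConcept.atom A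

def NFciTop (ci : CI) : Prop :=
  (AtomTop ci.1 ∧ AtomTop ci.2) ∨
  (∃ A₁ A₂, ci.1 = ELConcept.conj A₁ A₂ ∧ AtomTop A₁ ∧ AtomTop A₂ ∧ AtomTop ci.2) ∨
  (∃ r A, ci.1 = ELConcept.ex r A ∧ AtomTop A ∧ AtomTop ci.2) ∨
  (∃ r B, ci.2 = ELConcept.ex r B ∧ AtomTop B ∧ AtomTop ci.1)

def NormalFormTop (T : TBox) : Prop := ∀ ci ∈ T, NFciTop ci

/-! ### EL description trees -/

noncomputable def conjOf (s : Finset ℕ) : ELConcept :=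
  (s.toList.map ELConcept.atom).foldr ELConcept.conj ELConcept.top

structure DescTree where
  V : Finset ℕ
  root : ℕ
  E : Finset (ℕ × ℕ × ℕ)      -- (v, r, w) : edge from v to w labeled r
  label : ℕ → Finset ℕ
  dep : ℕ → ℕ
  root_mem : root ∈ V
  edge_mem : ∀ e ∈ E, e.1 ∈ V ∧ e.2.2 ∈ V
  parent_unique : ∀ e ∈ E, ∀ e' ∈ E, e.2.2 = e'.2.2 → e = e'
  parent_exists : ∀ v ∈ V, v ≠ root → ∃ e ∈ E, e.2.2 = v
  dep_root : dep root = 0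
  dep_edge : ∀ e ∈ E, dep e.2.2 = dep e.1 + 1

noncomputable def DescTree.conceptAt (t : DescTree) : ℕ → ℕ → ELConcept
  | 0, v => conjOf (t.label v)
  | n + 1, v =>
      ((t.label v).toList.map ELConcept.atom ++
        (t.E.filter (fun e => e.1 = v)).toList.map
          (fun e => ELConcept.ex e.2.1 (t.conceptAt n e.2.2))).foldr ELConcept.conj ELConcept.top

/-- The concept `C_𝔗` represented by a description tree. -/
noncomputable def DescTree.concept (t : DescTree) : ELConcept := t.conceptAt t.V.card t.root

/-- `t` is a description tree for the concept `D` (concept equality is taken modulo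
the conjunctions-as-sets convention). -/
def Represents (t : DescTree) (D : ELConcept) : Prop := CEq t.concept D

/-- Weak homomorphism from `src` to `tgt`. -/
def WeakHom (src tgt : DescTree) (φ : ℕ → ℕ) : Prop :=
  φ src.root = tgt.root ∧ ∀ e ∈ src.E, (φ e.1, e.2.1, φ e.2.2) ∈ tgt.E

/-- `T`-homomorphism from `src` to `tgt`. -/
def THom (T : TBox) (src tgt : DescTree) (φ : ℕ → ℕ) : Prop :=
  WeakHom src tgt φ ∧
  ∀ w ∈ src.V, Entails T (conjOf (tgt.label (φ w))) (conjOf (src.label w))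

/-! ### Abduction problems, hypotheses, connection minimality -/

inductive AtomConj (S : Set ℕ) : ELConcept → Prop
  | atom {A} : A ∈ S → AtomConj S (.atom A)
  | conj {C D} : AtomConj S C → AtomConj S D → AtomConj S (.conj C D)

def IsHypothesis (T : TBox) (S : Set ℕ) (C1 C2 : ℕ) (H : TBox) : Prop :=
  (∀ ci ∈ H, (AtomConj S ci.1 ∨ ci.1 = ELConcept.top) ∧ AtomConj S ci.2) ∧
  Entails (T ∪ H) (.atom C1) (.atom C2) ∧
  ∀ ci ∈ H, ¬ EntailsCI T ci

def BuiltOver (S : Set ℕ) (C : ELConcept) : Prop := C.concNames ⊆ S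

/-- The TBox determined by condition (4) of the definition of connection minimality. -/
def hypSetOf (T : TBox) (t1 t2 : DescTree) (φ : ℕ → ℕ) : Set CI :=
  {ci | ∃ w ∈ t2.V, ci = (conjOf (t1.label (φ w)), conjOf (t2.label w)) ∧
        ¬ EntailsCI T ci}

/-- Conditions (1)–(4) of connection minimality, with explicit witnessing
description trees `t1`, `t2` for `D1`, `D2` and the weak homomorphism `φ`
from `𝔗_{D₂}` to `𝔗_{D₁}`. -/
def ConnMinimalWit (T : TBox) (S : Set ℕ) (C1 C2 : ℕ) (H : TBox)
    (D1 D2 : ELConcept) (t1 t2 : DescTree) (φ : ℕ → ℕ) : Prop :=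
  BuiltOver S D1 ∧ BuiltOver S D2 ∧
  Represents t1 D1 ∧ Represents t2 D2 ∧
  Entails T (.atom C1) D1 ∧
  Entails T D2 (.atom C2) ∧
  (∀ D2', Entails T D2' (.atom C2) → PrecSq D2' D2 → PrecSq D2 D2') ∧
  WeakHom t2 t1 φ ∧
  (↑H : Set CI) = hypSetOf T t1 t2 φ

def ConnMinimal (T : TBox) (S : Set ℕ) (C1 C2 : ℕ) (H : TBox) : Prop :=
  IsHypothesis T S C1 C2 H ∧
  ∃ D1 D2 t1 t2 φ, ConnMinimalWit T S C1 C2 H D1 D2 t1 t2 φ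

/-- Packedness of a witness: no alternative `D₁'`, `φ'` (for the same `D₂`, `t₂`)
strictly enlarges one of the left-hand side labels while keeping all others. -/
def PackedWit (T : TBox) (S : Set ℕ) (C1 : ℕ) (t1 t2 : DescTree) (φ : ℕ → ℕ) : Prop :=
  ¬ ∃ (D1' : ELConcept) (t1' : DescTree) (φ' : ℕ → ℕ) (w : ℕ),
      BuiltOver S D1' ∧ Represents t1' D1' ∧ Entails T (.atom C1) D1' ∧
      WeakHom t2 t1' φ' ∧ w ∈ t2.V ∧
      t1.label (φ w) ⊂ t1'.label (φ' w) ∧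
      ∀ w' ∈ t2.V, w' ≠ w → t1.label (φ w') = t1'.label (φ' w')

def PackedConnMinimal (T : TBox) (S : Set ℕ) (C1 C2 : ℕ) (H : TBox) : Prop :=
  IsHypothesis T S C1 C2 H ∧
  ∃ D1 D2 t1 t2 φ, ConnMinimalWit T S C1 C2 H D1 D2 t1 t2 φ ∧
    PackedWit T S C1 t1 t2 φ

/-! ### First-order logic: terms, clauses, semantics -/

/-- Skolem functions: one for each (copy, axiom) pair. -/
abbrev SkFun := Bool × CI

inductive Term : Type where
  | var : ℕ → Term
  | sk0 : Term
  | app : SkFun → Term → Term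
deriving DecidableEq

/-- Ground Skolem terms. -/
inductive GTerm : Type where
  | sk0 : GTerm
  | app : SkFun → GTerm → GTerm
deriving DecidableEq

def GTerm.toTerm : GTerm → Term
  | .sk0 => .sk0
  | .app f t => .app f t.toTerm

def GTerm.depth : GTerm → ℕ
  | .sk0 => 0
  | .app _ t => t.depth + 1

inductive GTerm.Subterm : GTerm → GTerm → Prop
  | refl (t) : GTerm.Subterm t t
  | app {s t} (f) : GTerm.Subterm s t → GTerm.Subterm s (.app f t)

/-- Atoms; unary predicates `(b, A)` where `b = false` marks the original copy of the
atomic concept `A` and `b = true` its duplicate `Ā`. -/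
inductive Atm : Type where
  | conc : (Bool × ℕ) → Term → Atm
  | role : ℕ → Term → Term → Atm
deriving DecidableEq

structure Lit : Type where
  pos : Bool
  atm : Atm
deriving DecidableEq

abbrev Clause := Finset Lit

inductive GAtm : Type where
  | conc : (Bool × ℕ) → GTerm → GAtm
  | role : ℕ → GTerm → GTerm → GAtm
deriving DecidableEq

def GAtm.toAtm : GAtm → Atm
  | .conc P t => .conc P t.toTerm
  | .role r t u => .role r t.toTerm u.toTerm

structure FOInterp (α : Type) where
  c0 : α
  app : SkFun → α → α
  conc : Bool × ℕ → Set α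
  role : ℕ → Set (α × α)

def Term.eval {α : Type} (I : FOInterp α) (ρ : ℕ → α) : Term → α
  | .var x => ρ x
  | .sk0 => I.c0
  | .app f t => I.app f (t.eval I ρ)

def Atm.sat {α : Type} (I : FOInterp α) (ρ : ℕ → α) : Atm → Prop
  | .conc P t => t.eval I ρ ∈ I.conc P
  | .role r t u => (t.eval I ρ, u.eval I ρ) ∈ I.role r

def Lit.sat {α : Type} (I : FOInterp α) (ρ : ℕ → α) (l : Lit) : Prop :=
  if l.pos then l.atm.sat I ρ else ¬ l.atm.sat I ρ

/-- Satisfaction of a clause: the universal closure of the disjunction holds. -/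
def ClauseSat {α : Type} (I : FOInterp α) (c : Clause) : Prop :=
  ∀ ρ : ℕ → α, ∃ l ∈ c, l.sat I ρ

def CModels {α : Type} (I : FOInterp α) (Ψ : Set Clause) : Prop :=
  ∀ c ∈ Ψ, ClauseSat I c

def CEntails (Ψ : Set Clause) (c : Clause) : Prop :=
  ∀ (α : Type) (I : FOInterp α), CModels I Ψ → ClauseSat I c

def ClEntails (c d : Clause) : Prop := CEntails {c} d

def IsPrimeImplicate (Ψ : Set Clause) (c : Clause) : Prop :=
  CEntails Ψ c ∧ ∀ c' : Clause, CEntails Ψ c' → ClEntails c' c → ClEntails c c'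

def Term.vars : Term → Set ℕ
  | .var x => {x}
  | .sk0 => ∅
  | .app _ t => t.vars

def Atm.vars : Atm → Set ℕ
  | .conc _ t => t.vars
  | .role _ t u => t.vars ∪ u.vars

def ClauseVars (c : Clause) : Set ℕ := {x | ∃ l ∈ c, x ∈ l.atm.vars}

def ClauseGround (c : Clause) : Prop := ClauseVars c = ∅
def ClausePositive (c : Clause) : Prop := ∀ l ∈ c, l.pos = true
def ClauseNegative (c : Clause) : Prop := ∀ l ∈ c, l.pos = false

def Atm.inSig (S : Set ℕ) : Atm → Prop
  | .conc P _ => P.2 ∈ S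
  | .role _ _ _ => True

def ClauseInSig (S : Set ℕ) (c : Clause) : Prop := ∀ l ∈ c, l.atm.inSig S

/-- Positive ground prime implicates over `Σ ∪ N_R`. -/
def PIpos (S : Set ℕ) (Ψ : Set Clause) : Set Clause :=
  {c | IsPrimeImplicate Ψ c ∧ ClauseGround c ∧ ClausePositive c ∧ ClauseInSig S c}

/-- Negative ground prime implicates over `Σ ∪ N_R`. -/
def PIneg (S : Set ℕ) (Ψ : Set Clause) : Set Clause :=
  {c | IsPrimeImplicate Ψ c ∧ ClauseGround c ∧ ClauseNegative c ∧ ClauseInSig S c}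

/-- The ground atom `a` belongs (as a unit clause) to `PI^{g+}_Σ(Ψ)`. -/
def InPIpos (S : Set ℕ) (Ψ : Set Clause) (a : GAtm) : Prop :=
  ({⟨true, a.toAtm⟩} : Clause) ∈ PIpos S Ψ

/-! ### Substitutions and resolution -/

def Term.subst (σ : ℕ → Term) : Term → Term
  | .var x => σ x
  | .sk0 => .sk0
  | .app f t => .app f (t.subst σ)

def Atm.subst (σ : ℕ → Term) : Atm → Atm
  | .conc P t => .conc P (t.subst σ)
  | .role r t u => .role r (t.subst σ) (u.subst σ)

def Lit.subst (σ : ℕ → Term) (l : Lit) : Lit := ⟨l.pos, l.atm.subst σ⟩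

def ClauseSubst (σ : ℕ → Term) (c : Clause) : Clause := c.image (Lit.subst σ)

def IsUnifier (σ : ℕ → Term) (a b : Atm) : Prop := a.subst σ = b.subst σ

def IsMGU (σ : ℕ → Term) (a b : Atm) : Prop :=
  IsUnifier σ a b ∧ ∀ τ, IsUnifier τ a b → ∃ δ, ∀ x, (σ x).subst δ = τ x

/-- Resolution derivations from `Ψ`, where every resolvent must satisfy `ok`. -/
inductive Deriv (Ψ : Set Clause) (ok : Clause → Prop) : Clause → Prop
  | hyp {c : Clause} : c ∈ Ψ → Deriv Ψ ok c
  | res {c₁ c₂ : Clause} {a b : Atm} {σ : ℕ → Term} :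
      Deriv Ψ ok c₁ → Deriv Ψ ok c₂ →
      (⟨true, a⟩ : Lit) ∈ c₁ → (⟨false, b⟩ : Lit) ∈ c₂ → IsMGU σ a b →
      ok (ClauseSubst σ (c₁.erase ⟨true, a⟩ ∪ c₂.erase ⟨false, b⟩)) →
      Deriv Ψ ok (ClauseSubst σ (c₁.erase ⟨true, a⟩ ∪ c₂.erase ⟨false, b⟩))
  | factor {c : Clause} {l₁ l₂ : Lit} {σ : ℕ → Term} :
      Deriv Ψ ok c → l₁ ∈ c → l₂ ∈ c → l₁ ≠ l₂ → l₁.pos = l₂.pos →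
      IsMGU σ l₁.atm l₂.atm →
      ok (ClauseSubst σ (c.erase l₂)) →
      Deriv Ψ ok (ClauseSubst σ (c.erase l₂))

/-! ### The translation Φ of an abduction problem -/

def vx : Term := .var 0
def vy : Term := .var 1
def pcl (b : Bool) (A : ℕ) (t : Term) : Lit := ⟨true, .conc (b, A) t⟩
def ncl (b : Bool) (A : ℕ) (t : Term) : Lit := ⟨false, .conc (b, A) t⟩
def prl (r : ℕ) (t u : Term) : Lit := ⟨true, .role r t u⟩
def nrl (r : ℕ) (t u : Term) : Lit := ⟨false, .role r t u⟩

def clausesOf (b : Bool) (ci : CI) : Set Clause :=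
  match ci with
  | (.atom A, .atom B) => {({ncl b A vx, pcl b B vx} : Clause)}
  | (.conj (.atom A₁) (.atom A₂), .atom B) =>
      {({ncl b A₁ vx, ncl b A₂ vx, pcl b B vx} : Clause)}
  | (.ex r (.atom A), .atom B) =>
      {({nrl r vx vy, ncl b A vy, pcl b B vx} : Clause)}
  | (.atom A, .ex r (.atom B)) =>
      {({ncl b A vx, prl r vx (.app (b, (.atom A, .ex r (.atom B))) vx)} : Clause),
       ({ncl b A vx, pcl b B (.app (b, (.atom A, .ex r (.atom B))) vx)} : Clause)}
  | _ => ∅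

/-- The clausal translation `Φ` of the abduction problem `⟨T, Σ, C₁ ⊑ C₂⟩`. -/
def Translation (T : TBox) (C1 C2 : ℕ) : Set Clause :=
  (⋃ ci ∈ T, clausesOf false ci ∪ clausesOf true ci) ∪
  {({pcl false C1 .sk0} : Clause), ({ncl true C2 .sk0} : Clause)}

/-- The presaturation `Φ_p` of a clause set. -/
def presat (Ψ : Set Clause) : Set Clause :=
  Ψ ∪ {c | ∃ (b : Bool) (A B : ℕ),
        c = ({ncl b A vx, pcl b B vx} : Clause) ∧ CEntails Ψ c}

/-! ### Herbrand interpretations -/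

def herb (S : Set GAtm) : FOInterp GTerm where
  c0 := .sk0
  app := .app
  conc := fun P => {t | GAtm.conc P t ∈ S}
  role := fun r => {p | GAtm.role r p.1 p.2 ∈ S}

def HModels (S : Set GAtm) (Ψ : Set Clause) : Prop := CModels (herb S) Ψ

def piPosAtoms (S : Set ℕ) (Ψ : Set Clause) : Set GAtm := {a | InPIpos S Ψ a}

/-- EL semantics of a concept in a Herbrand interpretation (original predicates). -/
def gsem (I : Set GAtm) : ELConcept → Set GTerm
  | .top => Set.univ
  | .atom A => {t | GAtm.conc (false, A) t ∈ I}
  | .conj C D => gsem I C ∩ gsem I D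
  | .ex r C => {t | ∃ u, GAtm.role r t u ∈ I ∧ u ∈ gsem I C}

/-! ### Canonical models of description trees -/

/-- The canonical model `I^c(sl)` of a description tree with Skolem labeling `sl`. -/
def canonModel (t : DescTree) (sl : ℕ → GTerm) : Set GAtm :=
  {a | ∃ e ∈ t.E, a = GAtm.role e.2.1 (sl e.1) (sl e.2.2)} ∪
  {a | ∃ v ∈ t.V, ∃ A ∈ t.label v, a = GAtm.conc (false, A) (sl v)}

/-- The unary-predicate part `I^c_A(sl)` of the canonical model, as labelled pairs. -/
def canonA (t : DescTree) (sl : ℕ → GTerm) : Set (ℕ × GTerm) :=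
  {p | ∃ v ∈ t.V, p.1 ∈ t.label v ∧ p.2 = sl v}

/-- The clause `⋁_{v ∈ V₂, B ∈ l₂(v)} ¬B̄(sl v)`. -/
def negTreeClause (t : DescTree) (sl : ℕ → GTerm) : Clause :=
  t.V.biUnion (fun v =>
    (t.label v).image (fun B => (⟨false, Atm.conc (true, B) (sl v).toTerm⟩ : Lit)))

/-! ### Constructible hypotheses -/

def negClauseOf (B : Finset (ℕ × GTerm)) : Clause :=
  B.image (fun p => (⟨false, Atm.conc (true, p.1) p.2.toTerm⟩ : Lit))

def posUnit (p : ℕ × GTerm) : Clause := {⟨true, Atm.conc (false, p.1) p.2.toTerm⟩}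

/-- `C_{X,t} = ⊓{A | A(t) ∈ X}`. -/
noncomputable def CAt (X : Finset (ℕ × GTerm)) (t : GTerm) : ELConcept :=
  conjOf ((X.filter (fun p => p.2 = t)).image Prod.fst)

/-- `H` is the hypothesis constructed from the sets `A` and `B` of ground atoms. -/
def ConstructibleVia (S : Set ℕ) (Ψ : Set Clause)
    (A B : Finset (ℕ × GTerm)) (H : TBox) : Prop :=
  A.Nonempty ∧ B.Nonempty ∧
  negClauseOf B ∈ PIneg S Ψ ∧
  (∀ p ∈ B, ∃ a, InPIpos S Ψ (GAtm.conc (false, a) p.2)) ∧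
  ((↑A : Set (ℕ × GTerm)) =
    {q | InPIpos S Ψ (GAtm.conc (false, q.1) q.2) ∧ ∃ p ∈ B, p.2 = q.2}) ∧
  ((↑H : Set CI) =
    {ci | ∃ p ∈ B, ci = (CAt A p.2, CAt B p.2) ∧ ¬ PrecSq (CAt B p.2) (CAt A p.2)})

def Constructible (S : Set ℕ) (Ψ : Set Clause) (H : TBox) : Prop :=
  ∃ A B, ConstructibleVia S Ψ A B H

/-! ### Clause shapes I3–I7, signature counts -/

def isI3 (c : Clause) : Prop :=
  ∃ P Q : Bool × ℕ, c = ({⟨false, .conc P vx⟩, ⟨true, .conc Q vx⟩} : Clause)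

def isI4 (c : Clause) : Prop :=
  ∃ P₁ P₂ Q : Bool × ℕ,
    c = ({⟨false, .conc P₁ vx⟩, ⟨false, .conc P₂ vx⟩, ⟨true, .conc Q vx⟩} : Clause)

def isI5 (c : Clause) : Prop :=
  ∃ (r : ℕ) (P Q : Bool × ℕ),
    c = ({⟨false, .role r vx vy⟩, ⟨false, .conc P vy⟩, ⟨true, .conc Q vx⟩} : Clause)

def isI7 (c : Clause) : Prop :=
  ∃ (P Q : Bool × ℕ) (f : SkFun),
    c = ({⟨false, .conc P vx⟩, ⟨true, .conc Q (.app f vx)⟩} : Clause)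

/-- The atomic concept `A_sk` occurring positively in the I7-clause introducing `sk`
(as a predicate, with the copy flag of `sk`). -/
def skHeadPred (f : SkFun) : Bool × ℕ :=
  (f.1, match f.2.2 with
        | .ex _ (.atom B) => B
        | _ => 0)

def Term.funs : Term → Set SkFun
  | .var _ => ∅
  | .sk0 => ∅
  | .app f t => insert f t.funs

def Atm.funs : Atm → Set SkFun
  | .conc _ t => t.funs
  | .role _ t u => t.funs ∪ u.funs

def clauseFuns (c : Clause) : Set SkFun := {f | ∃ l ∈ c, f ∈ l.atm.funs}

def clauseConcs (c : Clause) : Set (Bool × ℕ) := {P | ∃ l ∈ c, ∃ t, l.atm = Atm.conc P t}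

/-- The number of atomic concepts occurring in a clause set. -/
noncomputable def numConcs (Ψ : Set Clause) : ℕ := Set.ncard {P | ∃ c ∈ Ψ, P ∈ clauseConcs c}

/-- The number of occurrences of existential role restrictions in a TBox. -/
def exOccs (T : TBox) : ℕ := T.sum (fun ci => ci.1.exCount + ci.2.exCount)

/-- The number of Skolem functions occurring in `Ψ` introduced for the original copy. -/
noncomputable def numOrigSk (Ψ : Set Clause) : ℕ :=
  Set.ncard {f : SkFun | f.1 = false ∧ ∃ c ∈ Ψ, f ∈ clauseFuns c}

def unitC (P : Bool × ℕ) (t : GTerm) : Clause := {⟨true, .conc P t.toTerm⟩}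
def negUnitC (P : Bool × ℕ) (t : GTerm) : Clause := {⟨false, .conc P t.toTerm⟩}

/-! ### Skolem trees and solution trees -/

structure SkolemTree where
  V : Finset ℕ
  root : ℕ
  E : Finset (ℕ × ℕ)
  s : ℕ → GTerm
  dep : ℕ → ℕ
  root_mem : root ∈ V
  s_root : s root = .sk0
  edge_mem : ∀ e ∈ E, e.1 ∈ V ∧ e.2 ∈ V
  edge_term : ∀ e ∈ E, s e.2 = s e.1 ∨ ∃ f, s e.2 = GTerm.app f (s e.1)
  parent_unique : ∀ e ∈ E, ∀ e' ∈ E, e.2 = e'.2 → e = e'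
  parent_exists : ∀ v ∈ V, v ≠ root → ∃ e ∈ E, e.2 = v
  dep_root : dep root = 0
  dep_edge : ∀ e ∈ E, dep e.2 = dep e.1 + 1

/-- `v` is an ancestor of `w` (every node is an ancestor of itself). -/
def SkolemTree.Ancestor (F : SkolemTree) (v w : ℕ) : Prop :=
  Relation.ReflTransGen (fun a b => (a, b) ∈ F.E) v w

/-- The descendants of `v` (the nodes of the subtree under `v`). -/
def SkolemTree.Desc (F : SkolemTree) (v : ℕ) : Set ℕ := {w | F.Ancestor v w}

/-- The positive labeling `l⁺`. -/
def posLab (Ψ : Set Clause) (F : SkolemTree) (v : ℕ) : Set ℕ :=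
  {A | InPIpos Set.univ Ψ (GAtm.conc (false, A) (F.s v))}

def SkolemTree.children (F : SkolemTree) (v : ℕ) : Finset ℕ :=
  (F.E.filter (fun e => e.1 = v)).image Prod.snd

def SkolemTree.leaves (F : SkolemTree) : Finset ℕ :=
  F.V.filter (fun v => F.E.filter (fun e => e.1 = v) = ∅)

/-- The unit role facts `{r(t, sk(t)) ∈ PI^{g+}}`. -/
def roleFacts (Ψ : Set Clause) : Set Clause :=
  {c | (∃ (r : ℕ) (t : GTerm) (f : SkFun),
        c = ({⟨true, Atm.role r t.toTerm (GTerm.app f t).toTerm⟩} : Clause)) ∧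
       c ∈ PIpos Set.univ Ψ}

def nonGroundOf (Ψ : Set Clause) : Set Clause := {c | c ∈ Ψ ∧ ¬ ClauseGround c}

/-- Negative labeling `l⁻` for a Skolem tree (labels are duplicate concept names,
recorded by their underlying name in `N_C`). -/
def IsNegLabeling (Ψ : Set Clause) (C2 : ℕ) (F : SkolemTree) (ln : ℕ → ℕ) : Prop :=
  ln F.root = C2 ∧
  ∀ v ∈ F.V, F.children v ≠ ∅ →
    Deriv ({negUnitC (true, ln v) (F.s v)} ∪ roleFacts Ψ ∪ nonGroundOf (presat Ψ))
      (fun _ => True)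
      ((F.children v).image
        (fun w => (⟨false, Atm.conc (true, ln w) (F.s w).toTerm⟩ : Lit)))

/-- The clause `φ_{F,l⁻}` determined by the leaves.  (Clauses are finite sets of
literals, so it is automatically considered up to repetition of literals.) -/
def leavesClause (F : SkolemTree) (ln : ℕ → ℕ) : Clause :=
  F.leaves.image (fun v => (⟨false, Atm.conc (true, ln v) (F.s v).toTerm⟩ : Lit))

def IsSolutionTree (Ψ : Set Clause) (C2 : ℕ) (F : SkolemTree) (ln : ℕ → ℕ) : Prop :=
  (∀ v ∈ F.V, (posLab Ψ F v).Nonempty) ∧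
  IsNegLabeling Ψ C2 F ln ∧
  leavesClause F ln ∈ PIneg Set.univ Ψ ∧
  ∃ (A B : Finset (ℕ × GTerm)) (H : TBox),
    ConstructibleVia Set.univ Ψ A B H ∧
    (↑B : Set (ℕ × GTerm)) = {p | ∃ v ∈ F.leaves, p = (ln v, F.s v)}

/-- The solution `{⊓l⁺(v) ⊑ l⁻(v) | v a leaf}` of a solution tree. -/
def treeSol (Ψ : Set Clause) (F : SkolemTree) (ln : ℕ → ℕ) : Set CI :=
  {ci | ∃ v ∈ F.leaves, ∃ s : Finset ℕ, (↑s : Set ℕ) = posLab Ψ F v ∧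
        ci = (conjOf s, ELConcept.atom (ln v))}

/-- Minimality: no solution tree with strictly fewer nodes has a solution
included in the solution of this one. -/
def MinimalSolutionTree (Ψ : Set Clause) (C2 : ℕ) (F : SkolemTree) (ln : ℕ → ℕ) : Prop :=
  IsSolutionTree Ψ C2 F ln ∧
  ∀ (F' : SkolemTree) (ln' : ℕ → ℕ),
    IsSolutionTree Ψ C2 F' ln' →
    treeSol Ψ F' ln' ⊆ treeSol Ψ F ln →
    F.V.card ≤ F'.V.card

/-- Replace the (unique) occurrence of `old` as a suffix of a ground term by `new`. -/
def GTerm.replaceSuffix (old new : GTerm) : GTerm → GTerm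
  | .sk0 => if GTerm.sk0 = old then new else .sk0
  | .app f u => if GTerm.app f u = old then new else .app f (GTerm.replaceSuffix old new u)



/-! ### Auxiliary development for Statement 8 -/

section Aux

open Classical

/-! #### Semantics of folded conjunctions -/

lemma sem_foldr {α : Type} (I : Interp α) (L : List ELConcept) (x : α) :
    x ∈ (L.foldr ELConcept.conj ELConcept.top).sem I ↔ ∀ C ∈ L, x ∈ C.sem I := by
  induction L with
  | nil => simp [ELConcept.sem]
  | cons C L ih => simp [ELConcept.sem, ih]

lemma sem_conjOf {α : Type} (I : Interp α) (s : Finset ℕ) (x : α) :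
    x ∈ (conjOf s).sem I ↔ ∀ A ∈ s, x ∈ I.conc A := by
  rw [conjOf, sem_foldr]
  constructor
  · intro h A hA
    exact h _ (List.mem_map_of_mem (Finset.mem_toList.2 hA))
  · rintro h C hC
    rcases List.mem_map.1 hC with ⟨A, hA, rfl⟩
    exact h A (Finset.mem_toList.1 hA)

/-! #### Ground terms and evaluation -/

def geval (ρ : ℕ → GTerm) : Term → GTerm
  | .var x => ρ x
  | .sk0 => .sk0
  | .app f t => .app f (geval ρ t)

lemma herb_eval (S : Set GAtm) (ρ : ℕ → GTerm) (t : Term) :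
    Term.eval (herb S) ρ t = geval ρ t := by
  induction t with
  | var x => rfl
  | sk0 => rfl
  | app f t ih =>
      show GTerm.app f (Term.eval (herb S) ρ t) = _
      rw [ih]; rfl

lemma geval_toTerm (ρ : ℕ → GTerm) (g : GTerm) : geval ρ g.toTerm = g := by
  induction g <;> simp [GTerm.toTerm, geval, *]

def evalG {α : Type} (J : FOInterp α) : GTerm → α
  | .sk0 => J.c0
  | .app f t => J.app f (evalG J t)

lemma eval_toTerm {α : Type} (J : FOInterp α) (ρ : ℕ → α) (g : GTerm) :
    Term.eval J ρ g.toTerm = evalG J g := by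
  induction g <;> simp [GTerm.toTerm, Term.eval, evalG, *]

lemma toTerm_vars (g : GTerm) : g.toTerm.vars = ∅ := by
  induction g <;> simp [GTerm.toTerm, Term.vars, *]

lemma toAtm_vars (a : GAtm) : a.toAtm.vars = ∅ := by
  cases a <;> simp [GAtm.toAtm, Atm.vars, toTerm_vars]

lemma ground_eq_toTerm {t : Term} (h : t.vars = ∅) (ρ : ℕ → GTerm) :
    t = (geval ρ t).toTerm := by
  induction t with
  | var x => simp [Term.vars] at h
  | sk0 => rfl
  | app f t ih =>
      simp only [Term.vars] at h
      simp [geval, GTerm.toTerm, ← ih h]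

lemma herb_sat (S : Set GAtm) (ρ : ℕ → GTerm) (a : GAtm) :
    Atm.sat (herb S) ρ a.toAtm ↔ a ∈ S := by
  cases a with
  | conc P t =>
      show Term.eval (herb S) ρ t.toTerm ∈ (herb S).conc P ↔ _
      rw [herb_eval, geval_toTerm]
      exact Iff.rfl
  | role r t u =>
      show (Term.eval (herb S) ρ t.toTerm, Term.eval (herb S) ρ u.toTerm) ∈ (herb S).role r ↔ _
      rw [herb_eval, herb_eval, geval_toTerm, geval_toTerm]
      exact Iff.rfl

lemma unit_sat {α : Type} {J : FOInterp α} {Ψ : Set Clause} (hJ : CModels J Ψ)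
    {a : GAtm} (h : CEntails Ψ ({⟨true, a.toAtm⟩} : Clause)) (ρ : ℕ → α) :
    Atm.sat J ρ a.toAtm := by
  obtain ⟨l, hl, hs⟩ := h α J hJ ρ
  rw [Finset.mem_singleton] at hl
  subst hl
  simpa [Lit.sat] using hs

/-! #### Membership in the translation -/

lemma mem_translation {T : TBox} {C1 C2 : ℕ} {c : Clause} :
    c ∈ Translation T C1 C2 ↔
      (∃ ci ∈ T, c ∈ clausesOf false ci ∪ clausesOf true ci) ∨
      c = ({pcl false C1 .sk0} : Clause) ∨ c = ({ncl true C2 .sk0} : Clause) := by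
  constructor
  · intro h
    rcases (Set.mem_union _ _ _).1 h with h | h
    · exact Or.inl (by simpa using Set.mem_iUnion₂.1 h)
    · rcases Set.mem_insert_iff.1 h with rfl | h
      · exact Or.inr (Or.inl rfl)
      · exact Or.inr (Or.inr (Set.mem_singleton_iff.1 h))
  · rintro (⟨ci, hci, hc⟩ | rfl | rfl)
    · exact Set.mem_union_left _ (Set.mem_iUnion₂.2 ⟨ci, hci, hc⟩)
    · exact Set.mem_union_right _ (Set.mem_insert _ _)
    · exact Set.mem_union_right _ (Set.mem_insert_iff.2 (Or.inr rfl))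

/-! #### The model `foiOf` built from an EL model -/

noncomputable def foiOf {α : Type} (I : Interp α) (d : α) : FOInterp α where
  c0 := d
  app := fun f x =>
    match f.2 with
    | (.atom _, .ex r (.atom B)) =>
        if h : ∃ y, (x, y) ∈ I.role r ∧ y ∈ I.conc B then h.choose else d
    | _ => d
  conc := fun P => if P.1 = true then ∅ else I.conc P.2
  role := I.role

lemma foiOf_conc_false {α : Type} (I : Interp α) (d : α) (A : ℕ) :
    (foiOf I d).conc (false, A) = I.conc A := rfl

lemma foiOf_conc_true {α : Type} (I : Interp α) (d : α) (A : ℕ) :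
    (foiOf I d).conc (true, A) = ∅ := rfl

lemma foiOf_app {α : Type} (I : Interp α) (d : α) (b : Bool) (A r B : ℕ) (x : α) :
    (foiOf I d).app (b, (.atom A, .ex r (.atom B))) x =
      if h : ∃ y, (x, y) ∈ I.role r ∧ y ∈ I.conc B then h.choose else d := rfl

lemma foiOf_models {α : Type} {T : TBox} {C1 C2 : ℕ} (hNF : NormalForm T)
    (I : Interp α) (d : α) (hI : Models I T) (hd : d ∈ I.conc C1) :
    CModels (foiOf I d) (Translation T C1 C2) := by
  intro c hc
  rcases mem_translation.1 hc with ⟨ci, hci, hcc⟩ | rfl | rfl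
  · -- TBox clauses
    have hb : ∃ b : Bool, c ∈ clausesOf b ci := by
      rcases hcc with h | h
      exacts [⟨false, h⟩, ⟨true, h⟩]
    obtain ⟨b, hb⟩ := hb
    rcases hNF ci hci with ⟨A, B, rfl⟩ | ⟨A₁, A₂, B, rfl⟩ | ⟨r, A, B, rfl⟩ | ⟨A, r, B, rfl⟩
    · -- A ⊑ B
      simp only [clausesOf, Set.mem_singleton_iff] at hb
      subst hb
      intro ρ
      cases b with
      | true => exact ⟨ncl true A vx, by simp, by simp [Lit.sat, ncl, Atm.sat, foiOf_conc_true]⟩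
      | false =>
          by_cases hx : ρ 0 ∈ I.conc A
          · exact ⟨pcl false B vx, by simp,
              by simpa [Lit.sat, pcl, Atm.sat, Term.eval, vx, foiOf_conc_false, ELConcept.sem] using
                hI _ hci hx⟩
          · exact ⟨ncl false A vx, by simp,
              by simpa [Lit.sat, ncl, Atm.sat, Term.eval, vx, foiOf_conc_false] using hx⟩
    · -- A₁ ⊓ A₂ ⊑ B
      simp only [clausesOf, Set.mem_singleton_iff] at hb
      subst hb
      intro ρ
      cases b with
      | true =>
          exact ⟨ncl true A₁ vx, by simp, by simp [Lit.sat, ncl, Atm.sat, foiOf_conc_true]⟩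
      | false =>
          by_cases h1 : ρ 0 ∈ I.conc A₁
          · by_cases h2 : ρ 0 ∈ I.conc A₂
            · exact ⟨pcl false B vx, by simp,
                by simpa [Lit.sat, pcl, Atm.sat, Term.eval, vx, foiOf_conc_false, ELConcept.sem] using
                  hI _ hci ⟨h1, h2⟩⟩
            · exact ⟨ncl false A₂ vx, by simp,
                by simpa [Lit.sat, ncl, Atm.sat, Term.eval, vx, foiOf_conc_false] using h2⟩
          · exact ⟨ncl false A₁ vx, by simp,
              by simpa [Lit.sat, ncl, Atm.sat, Term.eval, vx, foiOf_conc_false] using h1⟩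
    · -- ∃r.A ⊑ B
      simp only [clausesOf, Set.mem_singleton_iff] at hb
      subst hb
      intro ρ
      cases b with
      | true =>
          exact ⟨ncl true A vy, by simp, by simp [Lit.sat, ncl, Atm.sat, foiOf_conc_true]⟩
      | false =>
          by_cases hr : (ρ 0, ρ 1) ∈ I.role r
          · by_cases hA : ρ 1 ∈ I.conc A
            · refine ⟨pcl false B vx, by simp, ?_⟩
              have : ρ 0 ∈ (ELConcept.ex r (.atom A)).sem I := ⟨ρ 1, hr, hA⟩
              simpa [Lit.sat, pcl, Atm.sat, Term.eval, vx, foiOf_conc_false, ELConcept.sem] using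
                hI _ hci this
            · exact ⟨ncl false A vy, by simp,
                by simpa [Lit.sat, ncl, Atm.sat, Term.eval, vy, foiOf_conc_false] using hA⟩
          · refine ⟨nrl r vx vy, by simp, ?_⟩
            simpa [Lit.sat, nrl, Atm.sat, Term.eval, vx, vy, foiOf] using hr
    · -- A ⊑ ∃r.B
      simp only [clausesOf, Set.mem_insert_iff, Set.mem_singleton_iff] at hb
      cases b with
      | true =>
          rcases hb with rfl | rfl <;>
            exact fun ρ =>
              ⟨ncl true A vx, by simp, by simp [Lit.sat, ncl, Atm.sat, foiOf_conc_true]⟩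
      | false =>
          have key : ∀ x : α, x ∈ I.conc A →
              ∃ h : ∃ y, (x, y) ∈ I.role r ∧ y ∈ I.conc B, True := by
            intro x hx
            have := hI _ hci hx
            obtain ⟨y, hy1, hy2⟩ := this
            exact ⟨⟨y, hy1, hy2⟩, trivial⟩
          rcases hb with rfl | rfl <;> intro ρ
          · by_cases hx : ρ 0 ∈ I.conc A
            · obtain ⟨hEx, -⟩ := key _ hx
              refine ⟨prl r vx (.app (false, (.atom A, .ex r (.atom B))) vx), by simp, ?_⟩
              simp only [Lit.sat, prl, Atm.sat, Term.eval, vx, if_pos]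
              rw [foiOf_app]
              rw [dif_pos hEx]
              exact hEx.choose_spec.1
            · exact ⟨ncl false A vx, by simp,
                by simpa [Lit.sat, ncl, Atm.sat, Term.eval, vx, foiOf_conc_false] using hx⟩
          · by_cases hx : ρ 0 ∈ I.conc A
            · obtain ⟨hEx, -⟩ := key _ hx
              refine ⟨pcl false B (.app (false, (.atom A, .ex r (.atom B))) vx), by simp, ?_⟩
              simp only [Lit.sat, pcl, Atm.sat, Term.eval, vx, if_pos]
              rw [foiOf_conc_false, foiOf_app, dif_pos hEx]
              exact hEx.choose_spec.2
            · exact ⟨ncl false A vx, by simp,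
                by simpa [Lit.sat, ncl, Atm.sat, Term.eval, vx, foiOf_conc_false] using hx⟩
  · -- C1(sk0)
    intro ρ
    exact ⟨pcl false C1 .sk0, by simp,
      by simpa [Lit.sat, pcl, Atm.sat, Term.eval, foiOf_conc_false] using (show (foiOf I d).c0 ∈ I.conc C1 from hd)⟩
  · -- ¬C̄2(sk0)
    intro ρ
    exact ⟨ncl true C2 .sk0, by simp, by simp [Lit.sat, ncl, Atm.sat, foiOf_conc_true]⟩

/-! #### The trivial model -/

def trivI : Interp Unit := ⟨fun _ => Set.univ, fun _ => Set.univ⟩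

lemma trivI_sem (C : ELConcept) : C.sem trivI = Set.univ := by
  induction C with
  | top => rfl
  | atom A => rfl
  | conj C D ih1 ih2 => simp [ELConcept.sem, ih1, ih2]
  | ex r C ih =>
      ext d
      simp only [ELConcept.sem, Set.mem_setOf_eq, Set.mem_univ, iff_true]
      exact ⟨(), trivial, by rw [ih]; trivial⟩

lemma trivI_models (T : TBox) : Models trivI T := by
  intro ci _
  rw [trivI_sem, trivI_sem]

/-! #### The dead-point extension `optExt` -/

def optExt {α : Type} (J : FOInterp α) : FOInterp (Option α) where
  c0 := some J.c0
  app := fun f x => x.map (J.app f)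
  conc := fun P => some '' J.conc P
  role := fun r => {p | ∃ x y, (x, y) ∈ J.role r ∧ p = (some x, some y)}

lemma optExt_eval {α : Type} (J : FOInterp α) (ρ : ℕ → Option α) (ρ' : ℕ → α)
    (t : Term) (h : ∀ x ∈ t.vars, ρ x = some (ρ' x)) :
    Term.eval (optExt J) ρ t = some (Term.eval J ρ' t) := by
  induction t with
  | var x => exact h x (by simp [Term.vars])
  | sk0 => rfl
  | app f t ih =>
      show (Term.eval (optExt J) ρ t).map (J.app f) = _
      rw [ih (fun x hx => h x (by simpa [Term.vars] using hx))]
      rfl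

lemma optExt_eval_none {α : Type} (J : FOInterp α) (ρ : ℕ → Option α) {t : Term}
    {v : ℕ} (hv : v ∈ t.vars) (hn : ρ v = none) :
    Term.eval (optExt J) ρ t = none := by
  induction t with
  | var x =>
      simp only [Term.vars, Set.mem_singleton_iff] at hv
      subst hv; exact hn
  | sk0 => simp [Term.vars] at hv
  | app f t ih =>
      show (Term.eval (optExt J) ρ t).map (J.app f) = none
      rw [ih (by simpa [Term.vars] using hv)]
      rfl

lemma optExt_conc {α : Type} (J : FOInterp α) (P : Bool × ℕ) (z : α) :
    some z ∈ (optExt J).conc P ↔ z ∈ J.conc P := by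
  simp [optExt]

lemma optExt_conc_none {α : Type} (J : FOInterp α) (P : Bool × ℕ) :
    none ∉ (optExt J).conc P := by
  simp [optExt]

lemma optExt_role {α : Type} (J : FOInterp α) (r : ℕ) (z w : α) :
    (some z, some w) ∈ (optExt J).role r ↔ (z, w) ∈ J.role r := by
  simp only [optExt, Set.mem_setOf_eq, Prod.mk.injEq, Option.some.injEq]
  constructor
  · rintro ⟨x, y, hxy, rfl, rfl⟩; exact hxy
  · intro h; exact ⟨z, w, h, rfl, rfl⟩

lemma optExt_role_none {α : Type} (J : FOInterp α) (r : ℕ) (p : Option α × Option α)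
    (h : p.1 = none ∨ p.2 = none) : p ∉ (optExt J).role r := by
  rintro ⟨x, y, -, rfl⟩
  rcases h with h | h <;> simp at h

lemma optExt_lit {α : Type} (J : FOInterp α) {ρ : ℕ → Option α} {ρ' : ℕ → α}
    (l : Lit) (h : ∀ v ∈ l.atm.vars, ρ v = some (ρ' v)) :
    Lit.sat (optExt J) ρ l ↔ Lit.sat J ρ' l := by
  have hatm : Atm.sat (optExt J) ρ l.atm ↔ Atm.sat J ρ' l.atm := by
    cases hl : l.atm with
    | conc P t =>
        rw [hl] at h
        show Term.eval (optExt J) ρ t ∈ (optExt J).conc P ↔ _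
        rw [optExt_eval J ρ ρ' t (fun x hx => h x (by simpa [Atm.vars] using hx))]
        exact optExt_conc J P _
    | role r t u =>
        rw [hl] at h
        show (Term.eval (optExt J) ρ t, Term.eval (optExt J) ρ u) ∈ (optExt J).role r ↔ _
        rw [optExt_eval J ρ ρ' t (fun x hx => h x (by simp [Atm.vars, hx])),
          optExt_eval J ρ ρ' u (fun x hx => h x (by simp [Atm.vars, hx]))]
        exact optExt_role J r _ _
  cases hp : l.pos <;> simp [Lit.sat, hp, hatm]

/-- A clause in which every variable occurs in some negative literal transfers
to the dead-point extension. -/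
lemma optExt_clause {α : Type} {J : FOInterp α} {c : Clause}
    (hg : ∀ v ∈ ClauseVars c, ∃ l ∈ c, l.pos = false ∧ v ∈ l.atm.vars)
    (hJ : ClauseSat J c) : ClauseSat (optExt J) c := by
  intro ρ
  by_cases hN : ∃ v ∈ ClauseVars c, ρ v = none
  · obtain ⟨v, hv, hvn⟩ := hN
    obtain ⟨l, hl, hneg, hvl⟩ := hg v hv
    refine ⟨l, hl, ?_⟩
    have hA : ¬ Atm.sat (optExt J) ρ l.atm := by
      cases ha : l.atm with
      | conc P t =>
          rw [ha] at hvl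
          show Term.eval (optExt J) ρ t ∉ (optExt J).conc P
          rw [optExt_eval_none J ρ (by simpa [Atm.vars] using hvl) hvn]
          exact optExt_conc_none J P
      | role r t u =>
          rw [ha] at hvl
          show (Term.eval (optExt J) ρ t, Term.eval (optExt J) ρ u) ∉ (optExt J).role r
          rcases (by simpa [Atm.vars] using hvl : v ∈ t.vars ∨ v ∈ u.vars) with h | h
          · exact optExt_role_none J r _ (Or.inl (optExt_eval_none J ρ h hvn))
          · exact optExt_role_none J r _ (Or.inr (optExt_eval_none J ρ h hvn))
    simp [Lit.sat, hneg, hA]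
  · push_neg at hN
    set ρ' : ℕ → α := fun n => (ρ n).getD J.c0 with hρ'
    obtain ⟨l, hl, hs⟩ := hJ ρ'
    refine ⟨l, hl, ?_⟩
    rw [optExt_lit J l ?_]
    · exact hs
    · intro v hv
      have hvc : v ∈ ClauseVars c := ⟨l, hl, hv⟩
      have := hN v hvc
      cases hh : ρ v with
      | none => exact absurd hh this
      | some w => simp [hρ', hh]

/-- The guard condition holds for every clause of the translation. -/
lemma translation_guard {T : TBox} {C1 C2 : ℕ} (hNF : NormalForm T) {c : Clause}
    (hc : c ∈ Translation T C1 C2) :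
    ∀ v ∈ ClauseVars c, ∃ l ∈ c, l.pos = false ∧ v ∈ l.atm.vars := by
  rcases mem_translation.1 hc with ⟨ci, hci, hcc⟩ | rfl | rfl
  · have hb : ∃ b : Bool, c ∈ clausesOf b ci := by
      rcases hcc with h | h
      exacts [⟨false, h⟩, ⟨true, h⟩]
    obtain ⟨b, hb⟩ := hb
    rcases hNF ci hci with ⟨A, B, rfl⟩ | ⟨A₁, A₂, B, rfl⟩ | ⟨r, A, B, rfl⟩ | ⟨A, r, B, rfl⟩
    · simp only [clausesOf, Set.mem_singleton_iff] at hb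
      subst hb
      intro v hv
      obtain ⟨l, hl, hvl⟩ := hv
      refine ⟨ncl b A vx, by simp, rfl, ?_⟩
      rcases (by simpa using hl : l = ncl b A vx ∨ l = pcl b B vx) with rfl | rfl <;>
        simpa [ncl, pcl, Atm.vars] using hvl
    · simp only [clausesOf, Set.mem_singleton_iff] at hb
      subst hb
      intro v hv
      obtain ⟨l, hl, hvl⟩ := hv
      refine ⟨ncl b A₁ vx, by simp, rfl, ?_⟩
      rcases (by simpa using hl :
          l = ncl b A₁ vx ∨ l = ncl b A₂ vx ∨ l = pcl b B vx) with rfl | rfl | rfl <;>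
        simpa [ncl, pcl, Atm.vars] using hvl
    · simp only [clausesOf, Set.mem_singleton_iff] at hb
      subst hb
      intro v hv
      obtain ⟨l, hl, hvl⟩ := hv
      refine ⟨nrl r vx vy, by simp, rfl, ?_⟩
      rcases (by simpa using hl :
          l = nrl r vx vy ∨ l = ncl b A vy ∨ l = pcl b B vx) with rfl | rfl | rfl <;>
        simp_all [nrl, ncl, pcl, Atm.vars, vx, vy, Term.vars]
    · simp only [clausesOf, Set.mem_insert_iff, Set.mem_singleton_iff] at hb
      rcases hb with rfl | rfl <;>
      · intro v hv
        obtain ⟨l, hl, hvl⟩ := hv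
        refine ⟨ncl b A vx, by simp, rfl, ?_⟩
        rcases (by simpa using hl) with rfl | rfl <;>
          simp_all [ncl, pcl, prl, Atm.vars, vx, Term.vars]
  · intro v hv
    obtain ⟨l, hl, hvl⟩ := hv
    rcases (by simpa using hl : l = pcl false C1 .sk0) with rfl
    simp [pcl, Atm.vars, Term.vars] at hvl
  · intro v hv
    obtain ⟨l, hl, hvl⟩ := hv
    rcases (by simpa using hl : l = ncl true C2 .sk0) with rfl
    simp [ncl, Atm.vars, Term.vars] at hvl

lemma optExt_models {α : Type} {T : TBox} {C1 C2 : ℕ} (hNF : NormalForm T)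
    {J : FOInterp α} (hJ : CModels J (Translation T C1 C2)) :
    CModels (optExt J) (Translation T C1 C2) := by
  intro c hc
  exact optExt_clause (translation_guard hNF hc) (hJ c hc)

/-! #### Entailed positive ground unit clauses are prime implicates -/

lemma entails_imp_pipos {T : TBox} {C1 C2 : ℕ} (hNF : NormalForm T) (a : GAtm)
    (h : CEntails (Translation T C1 C2) ({⟨true, a.toAtm⟩} : Clause)) :
    InPIpos Set.univ (Translation T C1 C2) a := by
  have hM0 : CModels (foiOf trivI ()) (Translation T C1 C2) :=
    foiOf_models hNF trivI () (trivI_models T) trivial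
  refine ⟨⟨h, ?_⟩, ?_, ?_, ?_⟩
  · -- primality
    intro c' hc' hce
    have hmem : (⟨true, a.toAtm⟩ : Lit) ∈ c' := by
      by_contra hn
      -- Step A: all literals of c' are positive
      have hpos : ∀ l ∈ c', l.pos = true := by
        intro l hl
        cases hp : l.pos
        · exfalso
          have hm : CModels (herb (∅ : Set GAtm)) {c'} := by
            intro c hc
            rw [Set.mem_singleton_iff] at hc
            subst hc
            intro ρ
            refine ⟨l, hl, ?_⟩
            have hA : ¬ Atm.sat (herb (∅ : Set GAtm)) ρ l.atm := by
              cases l.atm <;> simp [Atm.sat, herb]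
            simp [Lit.sat, hp, hA]
          obtain ⟨l', hl', hs'⟩ := hce _ _ hm (fun _ => GTerm.sk0)
          rw [Finset.mem_singleton] at hl'
          subst hl'
          exact absurd ((herb_sat _ _ _).1 (by simpa [Lit.sat] using hs'))
            (Set.notMem_empty a)
        · rfl
      -- Step B: a substitution collapsing all literals to a
      set S : Set GAtm := {b | b ≠ a} with hS
      have hnot : ¬ ClauseSat (herb S) c' := by
        intro hcs
        have hm : CModels (herb S) {c'} := by
          intro c hc
          rw [Set.mem_singleton_iff] at hc
          subst hc
          exact hcs
        obtain ⟨l', hl', hs'⟩ := hce _ _ hm (fun _ => GTerm.sk0)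
        rw [Finset.mem_singleton] at hl'
        subst hl'
        have hmemS : a ∈ S := (herb_sat _ _ _).1 (by simpa [Lit.sat] using hs')
        rw [hS] at hmemS
        exact hmemS rfl
      unfold ClauseSat at hnot
      push_neg at hnot
      obtain ⟨ρ0, hρ0⟩ := hnot
      -- Step C: every literal of c' contains a variable
      have hga : ∀ l ∈ c', ∃ x, x ∈ l.atm.vars := by
        intro l hl
        by_contra hnv
        push_neg at hnv
        have hve : l.atm.vars = ∅ := Set.eq_empty_iff_forall_notMem.2 hnv
        have hlp := hpos l hl
        have hsat : ¬ Atm.sat (herb S) ρ0 l.atm := by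
          have := hρ0 l hl
          simpa [Lit.sat, hlp] using this
        have hla : l.atm = a.toAtm := by
          cases hatm : l.atm with
          | conc P t =>
              rw [hatm] at hve hsat
              have hveT : t.vars = ∅ := by simpa [Atm.vars] using hve
              have hga' : GAtm.conc P (geval ρ0 t) = a := by
                have : Term.eval (herb S) ρ0 t ∈ (herb S).conc P ↔
                    GAtm.conc P (geval ρ0 t) ∈ S := by rw [herb_eval]; exact Iff.rfl
                have h2 : GAtm.conc P (geval ρ0 t) ∉ S := fun hx => hsat (this.2 hx)
                simpa [hS] using h2
              rw [← hga']
              show Atm.conc P t = Atm.conc P ((geval ρ0 t).toTerm)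
              rw [← ground_eq_toTerm hveT ρ0]
          | role r t u =>
              rw [hatm] at hve hsat
              have hveT : t.vars = ∅ ∧ u.vars = ∅ := by
                constructor <;>
                  (apply Set.eq_empty_iff_forall_notMem.2; intro x hx;
                    exact Set.eq_empty_iff_forall_notMem.1 hve x (by simp [Atm.vars, hx]))
              have hga' : GAtm.role r (geval ρ0 t) (geval ρ0 u) = a := by
                have : (Term.eval (herb S) ρ0 t, Term.eval (herb S) ρ0 u) ∈
                    (herb S).role r ↔
                    GAtm.role r (geval ρ0 t) (geval ρ0 u) ∈ S := by
                  rw [herb_eval, herb_eval]; exact Iff.rfl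
                have h2 : GAtm.role r (geval ρ0 t) (geval ρ0 u) ∉ S :=
                  fun hx => hsat (this.2 hx)
                simpa [hS] using h2
              rw [← hga']
              show Atm.role r t u =
                Atm.role r ((geval ρ0 t).toTerm) ((geval ρ0 u).toTerm)
              rw [← ground_eq_toTerm hveT.1 ρ0, ← ground_eq_toTerm hveT.2 ρ0]
        have hleq : l = (⟨true, a.toAtm⟩ : Lit) := by
          cases l
          simp_all
        exact hn (hleq ▸ hl)
      -- Step D: the dead-point model refutes c'
      have hM0e : CModels (optExt (foiOf trivI ())) (Translation T C1 C2) :=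
        optExt_models hNF hM0
      obtain ⟨l, hl, hs⟩ := hc' _ _ hM0e (fun _ => none)
      obtain ⟨x, hx⟩ := hga l hl
      have hlp := hpos l hl
      have hA : ¬ Atm.sat (optExt (foiOf trivI ())) (fun _ => none) l.atm := by
        cases hatm : l.atm with
        | conc P t =>
            rw [hatm] at hx
            show Term.eval _ _ t ∉ _
            rw [optExt_eval_none _ _ (by simpa [Atm.vars] using hx) rfl]
            exact optExt_conc_none _ P
        | role r t u =>
            rw [hatm] at hx
            show (Term.eval _ _ t, Term.eval _ _ u) ∉ _
            rcases (by simpa [Atm.vars] using hx : x ∈ t.vars ∨ x ∈ u.vars) with hx | hx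
            · exact optExt_role_none _ r _ (Or.inl (optExt_eval_none _ _ hx rfl))
            · exact optExt_role_none _ r _ (Or.inr (optExt_eval_none _ _ hx rfl))
      exact hA (by simpa [Lit.sat, hlp] using hs)
    -- conclude
    intro β I hI ρ
    obtain ⟨l', hl', hs'⟩ := hI _ (Set.mem_singleton _) ρ
    rw [Finset.mem_singleton] at hl'
    subst hl'
    exact ⟨⟨true, a.toAtm⟩, hmem, hs'⟩
  · -- ground
    apply Set.eq_empty_iff_forall_notMem.2
    rintro x ⟨l, hl, hv⟩
    rw [Finset.mem_singleton] at hl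
    subst hl
    rw [toAtm_vars] at hv
    exact hv
  · -- positive
    intro l hl
    rw [Finset.mem_singleton] at hl
    subst hl
    rfl
  · -- signature
    intro l hl
    rw [Finset.mem_singleton] at hl
    subst hl
    cases a <;> simp [GAtm.toAtm, Atm.inSig]

/-! #### The minimal Herbrand model -/

inductive Hmin (T : TBox) (C1 : ℕ) : GAtm → Prop
  | base : Hmin T C1 (.conc (false, C1) .sk0)
  | sub {A B : ℕ} {g : GTerm} :
      (ELConcept.atom A, ELConcept.atom B) ∈ T →
      Hmin T C1 (.conc (false, A) g) → Hmin T C1 (.conc (false, B) g)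
  | cnj {A₁ A₂ B : ℕ} {g : GTerm} :
      (ELConcept.conj (.atom A₁) (.atom A₂), ELConcept.atom B) ∈ T →
      Hmin T C1 (.conc (false, A₁) g) → Hmin T C1 (.conc (false, A₂) g) →
      Hmin T C1 (.conc (false, B) g)
  | exl {r A B : ℕ} {g u : GTerm} :
      (ELConcept.ex r (.atom A), ELConcept.atom B) ∈ T →
      Hmin T C1 (.role r g u) → Hmin T C1 (.conc (false, A) u) →
      Hmin T C1 (.conc (false, B) g)
  | exr1 {A r B : ℕ} {g : GTerm} :
      (ELConcept.atom A, ELConcept.ex r (.atom B)) ∈ T →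
      Hmin T C1 (.conc (false, A) g) →
      Hmin T C1 (.role r g (.app (false, (.atom A, .ex r (.atom B))) g))
  | exr2 {A r B : ℕ} {g : GTerm} :
      (ELConcept.atom A, ELConcept.ex r (.atom B)) ∈ T →
      Hmin T C1 (.conc (false, A) g) →
      Hmin T C1 (.conc (false, B) (.app (false, (.atom A, .ex r (.atom B))) g))

def minInterp (T : TBox) (C1 : ℕ) : Interp GTerm :=
  ⟨fun A => {g | Hmin T C1 (.conc (false, A) g)},
   fun r => {p | Hmin T C1 (.role r p.1 p.2)}⟩

lemma minInterp_models {T : TBox} {C1 : ℕ} (hNF : NormalForm T) :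
    Models (minInterp T C1) T := by
  intro ci hci
  rcases hNF ci hci with ⟨A, B, rfl⟩ | ⟨A₁, A₂, B, rfl⟩ | ⟨r, A, B, rfl⟩ | ⟨A, r, B, rfl⟩
  · intro g hg
    exact Hmin.sub hci hg
  · rintro g ⟨h1, h2⟩
    exact Hmin.cnj hci h1 h2
  · rintro g ⟨u, h1, h2⟩
    exact Hmin.exl hci h1 h2
  · intro g hg
    exact ⟨_, Hmin.exr1 hci hg, Hmin.exr2 hci hg⟩

lemma sat_conc_iff {α : Type} (J : FOInterp α) (ρ : ℕ → α) (P : Bool × ℕ) (g : GTerm) :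
    Atm.sat J ρ (Atm.conc P g.toTerm) ↔ evalG J g ∈ J.conc P := by
  show Term.eval J ρ g.toTerm ∈ J.conc P ↔ _
  rw [eval_toTerm]

lemma sat_role_iff {α : Type} (J : FOInterp α) (ρ : ℕ → α) (r : ℕ) (g u : GTerm) :
    Atm.sat J ρ (Atm.role r g.toTerm u.toTerm) ↔ (evalG J g, evalG J u) ∈ J.role r := by
  show (Term.eval J ρ g.toTerm, Term.eval J ρ u.toTerm) ∈ J.role r ↔ _
  rw [eval_toTerm, eval_toTerm]

lemma hmin_sound {T : TBox} {C1 C2 : ℕ} {a : GAtm} (ha : Hmin T C1 a) :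
    CEntails (Translation T C1 C2) ({⟨true, a.toAtm⟩} : Clause) := by
  intro α J hJ ρ
  refine ⟨_, Finset.mem_singleton_self _, ?_⟩
  suffices hsat : Atm.sat J ρ a.toAtm by simpa [Lit.sat] using hsat
  induction ha with
  | base =>
      have hmem : ({pcl false C1 .sk0} : Clause) ∈ Translation T C1 C2 :=
        mem_translation.2 (Or.inr (Or.inl rfl))
      obtain ⟨l, hl, hs⟩ := hJ _ hmem ρ
      rw [Finset.mem_singleton] at hl
      subst hl
      simpa [Lit.sat, pcl, GAtm.toAtm, GTerm.toTerm] using hs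
  | @sub A B g hT _ ih =>
      have hmem : ({ncl false A vx, pcl false B vx} : Clause) ∈ Translation T C1 C2 :=
        mem_translation.2 (Or.inl ⟨_, hT, Or.inl (by simp [clausesOf])⟩)
      obtain ⟨l, hl, hs⟩ := hJ _ hmem (fun _ => evalG J g)
      have ih' : evalG J g ∈ J.conc (false, A) := (sat_conc_iff J ρ _ g).1 ih
      rcases (by simpa using hl : l = ncl false A vx ∨ l = pcl false B vx) with rfl | rfl
      · exact absurd ih' (by simpa [Lit.sat, ncl, Atm.sat, Term.eval, vx] using hs)
      · exact (sat_conc_iff J ρ _ g).2 (by simpa [Lit.sat, pcl, Atm.sat, Term.eval, vx] using hs)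
  | @cnj A₁ A₂ B g hT _ _ ih1 ih2 =>
      have hmem : ({ncl false A₁ vx, ncl false A₂ vx, pcl false B vx} : Clause) ∈
          Translation T C1 C2 :=
        mem_translation.2 (Or.inl ⟨_, hT, Or.inl (by simp [clausesOf])⟩)
      obtain ⟨l, hl, hs⟩ := hJ _ hmem (fun _ => evalG J g)
      have ih1' : evalG J g ∈ J.conc (false, A₁) := (sat_conc_iff J ρ _ g).1 ih1
      have ih2' : evalG J g ∈ J.conc (false, A₂) := (sat_conc_iff J ρ _ g).1 ih2
      rcases (by simpa using hl :
          l = ncl false A₁ vx ∨ l = ncl false A₂ vx ∨ l = pcl false B vx) with rfl | rfl | rfl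
      · exact absurd ih1' (by simpa [Lit.sat, ncl, Atm.sat, Term.eval, vx] using hs)
      · exact absurd ih2' (by simpa [Lit.sat, ncl, Atm.sat, Term.eval, vx] using hs)
      · exact (sat_conc_iff J ρ _ g).2 (by simpa [Lit.sat, pcl, Atm.sat, Term.eval, vx] using hs)
  | @exl r A B g u hT _ _ ih1 ih2 =>
      have hmem : ({nrl r vx vy, ncl false A vy, pcl false B vx} : Clause) ∈
          Translation T C1 C2 :=
        mem_translation.2 (Or.inl ⟨_, hT, Or.inl (by simp [clausesOf])⟩)
      obtain ⟨l, hl, hs⟩ := hJ _ hmem (fun n => if n = 0 then evalG J g else evalG J u)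
      have ih1' : (evalG J g, evalG J u) ∈ J.role r := (sat_role_iff J ρ r g u).1 ih1
      have ih2' : evalG J u ∈ J.conc (false, A) := (sat_conc_iff J ρ _ u).1 ih2
      rcases (by simpa using hl :
          l = nrl r vx vy ∨ l = ncl false A vy ∨ l = pcl false B vx) with rfl | rfl | rfl
      · exact absurd ih1' (by simpa [Lit.sat, nrl, Atm.sat, Term.eval, vx, vy] using hs)
      · exact absurd ih2' (by simpa [Lit.sat, ncl, Atm.sat, Term.eval, vy] using hs)
      · exact (sat_conc_iff J ρ _ g).2 (by simpa [Lit.sat, pcl, Atm.sat, Term.eval, vx] using hs)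
  | @exr1 A r B g hT _ ih =>
      have hmem : ({ncl false A vx,
          prl r vx (.app (false, (.atom A, .ex r (.atom B))) vx)} : Clause) ∈
          Translation T C1 C2 :=
        mem_translation.2 (Or.inl ⟨_, hT, Or.inl (by simp [clausesOf])⟩)
      obtain ⟨l, hl, hs⟩ := hJ _ hmem (fun _ => evalG J g)
      have ih' : evalG J g ∈ J.conc (false, A) := (sat_conc_iff J ρ _ g).1 ih
      rcases (by simpa using hl :
          l = ncl false A vx ∨ l = prl r vx (.app (false, (.atom A, .ex r (.atom B))) vx))
        with rfl | rfl
      · exact absurd ih' (by simpa [Lit.sat, ncl, Atm.sat, Term.eval, vx] using hs)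
      · refine (sat_role_iff J ρ r g _).2 ?_
        simpa [Lit.sat, prl, Atm.sat, Term.eval, vx, evalG] using hs
  | @exr2 A r B g hT _ ih =>
      have hmem : ({ncl false A vx,
          pcl false B (.app (false, (.atom A, .ex r (.atom B))) vx)} : Clause) ∈
          Translation T C1 C2 :=
        mem_translation.2 (Or.inl ⟨_, hT, Or.inl (by simp [clausesOf])⟩)
      obtain ⟨l, hl, hs⟩ := hJ _ hmem (fun _ => evalG J g)
      have ih' : evalG J g ∈ J.conc (false, A) := (sat_conc_iff J ρ _ g).1 ih
      rcases (by simpa using hl :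
          l = ncl false A vx ∨ l = pcl false B (.app (false, (.atom A, .ex r (.atom B))) vx))
        with rfl | rfl
      · exact absurd ih' (by simpa [Lit.sat, ncl, Atm.sat, Term.eval, vx] using hs)
      · refine (sat_conc_iff J ρ _ _).2 ?_
        simpa [Lit.sat, pcl, Atm.sat, Term.eval, vx, evalG] using hs

/-! #### Semantics of `conceptAt` -/

lemma conceptAt_zero_sem {α : Type} (I : Interp α) (t : DescTree) (v : ℕ) (x : α) :
    x ∈ (t.conceptAt 0 v).sem I ↔ ∀ A ∈ t.label v, x ∈ I.conc A := by
  show x ∈ (conjOf (t.label v)).sem I ↔ _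
  exact sem_conjOf I _ x

lemma conceptAt_succ_sem {α : Type} (I : Interp α) (t : DescTree) (n v : ℕ) (x : α) :
    x ∈ (t.conceptAt (n + 1) v).sem I ↔
      (∀ A ∈ t.label v, x ∈ I.conc A) ∧
      ∀ e ∈ t.E, e.1 = v → x ∈ (ELConcept.ex e.2.1 (t.conceptAt n e.2.2)).sem I := by
  show x ∈ ((_ : List ELConcept).foldr ELConcept.conj ELConcept.top).sem I ↔ _
  rw [sem_foldr]
  constructor
  · intro h
    constructor
    · intro A hA
      exact h _ (List.mem_append_left _ (List.mem_map_of_mem (Finset.mem_toList.2 hA)))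
    · intro e he hev
      exact h _ (List.mem_append_right _ (List.mem_map_of_mem
        (Finset.mem_toList.2 (Finset.mem_filter.2 ⟨he, hev⟩))))
  · rintro ⟨h1, h2⟩ C hC
    rcases List.mem_append.1 hC with hC | hC
    · rcases List.mem_map.1 hC with ⟨A, hA, rfl⟩
      exact h1 A (Finset.mem_toList.1 hA)
    · rcases List.mem_map.1 hC with ⟨e, he, rfl⟩
      have hm := Finset.mem_filter.1 (Finset.mem_toList.1 he)
      exact h2 e hm.1 (by simpa using hm.2)

lemma conceptAt_sem_of_hom {α : Type} (I : Interp α) (t : DescTree) (m : ℕ → α)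
    (hA : ∀ v ∈ t.V, ∀ A ∈ t.label v, m v ∈ I.conc A)
    (hE : ∀ e ∈ t.E, (m e.1, m e.2.2) ∈ I.role e.2.1) :
    ∀ n, ∀ v ∈ t.V, m v ∈ (t.conceptAt n v).sem I := by
  intro n
  induction n with
  | zero =>
      intro v hv
      exact (conceptAt_zero_sem I t v _).2 (hA v hv)
  | succ n ih =>
      intro v hv
      refine (conceptAt_succ_sem I t n v _).2 ⟨hA v hv, ?_⟩
      intro e he hev
      exact ⟨m e.2.2, by rw [← hev]; exact hE e he, ih _ (t.edge_mem e he).2⟩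

/-! #### Depth bounds in description trees -/

lemma dep_exists (t : DescTree) :
    ∀ k, ∀ v ∈ t.V, t.dep v = k → ∀ j, j ≤ k → ∃ w ∈ t.V, t.dep w = j := by
  intro k
  induction k with
  | zero =>
      intro v hv hd j hj
      exact ⟨v, hv, by omega⟩
  | succ k ih =>
      intro v hv hd j hj
      rcases Nat.lt_or_ge j (k + 1) with hlt | hge
      · have hvroot : v ≠ t.root := by
          intro h
          rw [h, t.dep_root] at hd
          omega
        obtain ⟨e, he, hev⟩ := t.parent_exists v hv hvroot
        have hdd := t.dep_edge e he
        rw [hev, hd] at hdd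
        exact ih e.1 (t.edge_mem e he).1 (by omega) j (by omega)
      · exact ⟨v, hv, by omega⟩

lemma dep_lt_card (t : DescTree) (v : ℕ) (hv : v ∈ t.V) : t.dep v < t.V.card := by
  classical
  have h : ∀ j : ℕ, ∃ w, j ≤ t.dep v → w ∈ t.V ∧ t.dep w = j := by
    intro j
    by_cases hj : j ≤ t.dep v
    · obtain ⟨w, hw1, hw2⟩ := dep_exists t (t.dep v) v hv rfl j hj
      exact ⟨w, fun _ => ⟨hw1, hw2⟩⟩
    · exact ⟨0, fun h => absurd h hj⟩
  choose f hf using h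
  have hcard : (Finset.range (t.dep v + 1)).card ≤ t.V.card := by
    apply Finset.card_le_card_of_injOn f
    · intro j hj
      exact (hf j (by simpa [Nat.lt_succ_iff] using hj)).1
    · intro j1 h1 j2 h2 he
      have e1 := (hf j1 (by simpa [Nat.lt_succ_iff] using h1)).2
      have e2 := (hf j2 (by simpa [Nat.lt_succ_iff] using h2)).2
      rw [he] at e1
      omega
  simpa using hcard

/-! #### The Skolem labeling -/

noncomputable def slFun (T : TBox) (C1 : ℕ) (t : DescTree) (n : ℕ) (v : ℕ) : GTerm :=
  if hv : v ∈ t.V ∧ v ≠ t.root then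
    if h : ∃ u, Hmin T C1 (GAtm.role (t.parent_exists v hv.1 hv.2).choose.2.1
          (slFun T C1 t n (t.parent_exists v hv.1 hv.2).choose.1) u) ∧
        u ∈ ((t.conceptAt (n - t.dep v) v).sem (minInterp T C1)) then h.choose
    else .sk0
  else .sk0
termination_by t.dep v
decreasing_by
  all_goals
    obtain ⟨h1, h2⟩ := (t.parent_exists v hv.1 hv.2).choose_spec
    have h3 := t.dep_edge _ h1
    rw [h2] at h3
    omega

lemma slFun_root (T : TBox) (C1 : ℕ) (t : DescTree) (n : ℕ) :
    slFun T C1 t n t.root = .sk0 := by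
  rw [slFun]
  simp

lemma slFun_eq {T : TBox} {C1 : ℕ} {t : DescTree} {n v : ℕ}
    (hv : v ∈ t.V ∧ v ≠ t.root)
    (h : ∃ u, Hmin T C1 (GAtm.role (t.parent_exists v hv.1 hv.2).choose.2.1
          (slFun T C1 t n (t.parent_exists v hv.1 hv.2).choose.1) u) ∧
        u ∈ ((t.conceptAt (n - t.dep v) v).sem (minInterp T C1))) :
    slFun T C1 t n v = h.choose := by
  conv_lhs => rw [slFun]
  rw [dif_pos hv, dif_pos h]

lemma parentCond {T : TBox} {C1 : ℕ} (t : DescTree) (n : ℕ) {e : ℕ × ℕ × ℕ}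
    (he : e ∈ t.E) {v : ℕ} (hev : e.2.2 = v)
    (hp : slFun T C1 t n e.1 ∈ ((t.conceptAt (n - t.dep e.1) e.1).sem (minInterp T C1)))
    (hle : t.dep v ≤ n) :
    ∃ u, Hmin T C1 (GAtm.role e.2.1 (slFun T C1 t n e.1) u) ∧
      u ∈ ((t.conceptAt (n - t.dep v) v).sem (minInterp T C1)) := by
  subst hev
  have hdd := t.dep_edge e he
  have hm : n - t.dep e.1 = (n - t.dep e.2.2) + 1 := by omega
  rw [hm] at hp
  obtain ⟨u, hu1, hu2⟩ := ((conceptAt_succ_sem _ t _ _ _).1 hp).2 e he rfl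
  exact ⟨u, hu1, hu2⟩

lemma slFun_inv {T : TBox} {C1 : ℕ} (t : DescTree) (n : ℕ)
    (hroot : GTerm.sk0 ∈ ((t.conceptAt n t.root).sem (minInterp T C1)))
    (hdep : ∀ v ∈ t.V, t.dep v < n) :
    ∀ v ∈ t.V, slFun T C1 t n v ∈ ((t.conceptAt (n - t.dep v) v).sem (minInterp T C1)) := by
  have main : ∀ k, ∀ v ∈ t.V, t.dep v = k →
      slFun T C1 t n v ∈ ((t.conceptAt (n - t.dep v) v).sem (minInterp T C1)) := by
    intro k
    induction k using Nat.strong_induction_on with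
    | _ k ih =>
      intro v hv hk
      by_cases hr : v = t.root
      · subst hr
        rw [slFun_root, t.dep_root]
        simpa using hroot
      · have hv' : v ∈ t.V ∧ v ≠ t.root := ⟨hv, hr⟩
        obtain ⟨heE, hev⟩ := (t.parent_exists v hv'.1 hv'.2).choose_spec
        have hp1 : (t.parent_exists v hv'.1 hv'.2).choose.1 ∈ t.V :=
          (t.edge_mem _ heE).1
        have hdlt : t.dep (t.parent_exists v hv'.1 hv'.2).choose.1 < k := by
          have := t.dep_edge _ heE
          rw [hev, hk] at this
          omega
        have hp := ih _ hdlt _ hp1 rfl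
        have hcond := parentCond t n heE hev hp (le_of_lt (hdep v hv))
        rw [slFun_eq hv' hcond]
        exact hcond.choose_spec.2
  intro v hv
  exact main (t.dep v) v hv rfl

lemma slFun_edge {T : TBox} {C1 : ℕ} (t : DescTree) (n : ℕ)
    (hroot : GTerm.sk0 ∈ ((t.conceptAt n t.root).sem (minInterp T C1)))
    (hdep : ∀ v ∈ t.V, t.dep v < n) {e : ℕ × ℕ × ℕ} (he : e ∈ t.E) :
    Hmin T C1 (.role e.2.1 (slFun T C1 t n e.1) (slFun T C1 t n e.2.2)) := by
  have hvV : e.2.2 ∈ t.V := (t.edge_mem e he).2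
  have hvr : e.2.2 ≠ t.root := by
    intro h
    have := t.dep_edge e he
    rw [h, t.dep_root] at this
    omega
  have hv' : e.2.2 ∈ t.V ∧ e.2.2 ≠ t.root := ⟨hvV, hvr⟩
  obtain ⟨heE, hev⟩ := (t.parent_exists e.2.2 hv'.1 hv'.2).choose_spec
  have he0e : (t.parent_exists e.2.2 hv'.1 hv'.2).choose = e :=
    t.parent_unique _ heE e he hev
  have hp := slFun_inv t n hroot hdep _ (t.edge_mem _ heE).1
  have hcond := parentCond t n heE hev hp (le_of_lt (hdep _ hvV))
  obtain ⟨g, hg⟩ : ∃ g, hcond.choose = g := ⟨_, rfl⟩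
  rw [slFun_eq hv' hcond, hg]
  have h1 := hg ▸ hcond.choose_spec.1
  rw [he0e] at h1
  exact h1

lemma slFun_label {T : TBox} {C1 : ℕ} (t : DescTree) (n : ℕ)
    (hroot : GTerm.sk0 ∈ ((t.conceptAt n t.root).sem (minInterp T C1)))
    (hdep : ∀ v ∈ t.V, t.dep v < n) {v A : ℕ} (hv : v ∈ t.V) (hA : A ∈ t.label v) :
    Hmin T C1 (.conc (false, A) (slFun T C1 t n v)) := by
  have hinv := slFun_inv t n hroot hdep v hv
  obtain ⟨m, hm⟩ : ∃ m, n - t.dep v = m + 1 := ⟨n - t.dep v - 1, by have := hdep v hv; omega⟩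
  rw [hm] at hinv
  exact ((conceptAt_succ_sem _ t _ _ _).1 hinv).1 A hA

end Aux

/-- `T ⊨ C₁ ⊑ C_𝔗` iff some Skolem labeling rooted at `sk₀` has its
canonical model inside `PI^{g+}`. -/
theorem subsumer_iff_canonical_in_pipos
    (T : TBox) (C1 C2 : ℕ) (hNF : NormalForm T)
    (hno : ¬ Entails T (.atom C1) (.atom C2))
    (t : DescTree) :
    Entails T (.atom C1) t.concept ↔
      ∃ sl : ℕ → GTerm, sl t.root = GTerm.sk0 ∧
        ∀ a ∈ canonModel t sl, InPIpos Set.univ (Translation T C1 C2) a := by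
  constructor
  · -- forward direction
    intro hEnt
    have hdep : ∀ v ∈ t.V, t.dep v < t.V.card := fun v hv => dep_lt_card t v hv
    have hroot : GTerm.sk0 ∈ ((t.conceptAt t.V.card t.root).sem (minInterp T C1)) :=
      hEnt GTerm (minInterp T C1) (minInterp_models hNF) Hmin.base
    refine ⟨slFun T C1 t t.V.card, slFun_root T C1 t t.V.card, ?_⟩
    intro a ha
    apply entails_imp_pipos hNF
    apply hmin_sound
    rcases ha with ⟨e, he, rfl⟩ | ⟨v, hv, A, hA, rfl⟩
    · exact slFun_edge t t.V.card hroot hdep he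
    · exact slFun_label t t.V.card hroot hdep hv hA
  · -- backward direction
    rintro ⟨sl, hsl0, hpi⟩
    intro α I hI d hd
    have hJ : CModels (foiOf I d) (Translation T C1 C2) :=
      foiOf_models hNF I d hI hd
    have hsat : ∀ a ∈ canonModel t sl, Atm.sat (foiOf I d) (fun _ => d) a.toAtm :=
      fun a ha => unit_sat hJ ((hpi a ha).1.1) _
    set m : ℕ → α := fun v => evalG (foiOf I d) (sl v) with hm
    have hA : ∀ v ∈ t.V, ∀ A ∈ t.label v, m v ∈ I.conc A := by
      intro v hv A hAv
      exact (sat_conc_iff (foiOf I d) (fun _ => d) (false, A) (sl v)).1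
        (hsat _ (Set.mem_union_right _ ⟨v, hv, A, hAv, rfl⟩))
    have hE : ∀ e ∈ t.E, (m e.1, m e.2.2) ∈ I.role e.2.1 := by
      intro e he
      exact (sat_role_iff (foiOf I d) (fun _ => d) e.2.1 (sl e.1) (sl e.2.2)).1
        (hsat _ (Set.mem_union_left _ ⟨e, he, rfl⟩))
    have hc := conceptAt_sem_of_hom I t m hA hE t.V.card t.root t.root_mem
    have hmr : m t.root = d := by rw [hm]; simp only [hsl0]; rfl
    rw [hmr] at hc
    exact hc

end ELAbd
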